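/- Let (S,K,I) be a split graph with ⋃_{v∈I} N_S(v) = K, |K| equal to the clique number of S, and |I| equal to the independence number of S with |I| ≥ 2. Suppose σ_{uv}(S) = 1 for all distinct u,v ∈ I (i.e., Φ(S) is simple and complete), let U be the set of universal vertices of S, and let d be the common degree in S of the vertices of I. Then: (a) S is active (every vertex lies in some induced P4) if and only if U = ∅; (b) if S is active then |K| = |I| and d ∈ {1, |K| − 1}; (c) conversely, if |K| = |I| or d = 1, then S is active. -/

import Mathlib

open SimpleGraph
open Finset

/-- `T` is a 4-element vertex subset of `S` whose induced subgraph is a path on 4 vertices. -/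
def IsInducedP4 {V : Type*} (S : SimpleGraph V) (T : Finset V) : Prop :=
  T.card = 4 ∧ Nonempty (S.induce (T : Set V) ≃g pathGraph 4)

/-- `σ_{uv}(S)`: the number of induced `P4`'s of `S` containing both `u` and `v`. -/
noncomputable def sigmaP4 {V : Type*} (S : SimpleGraph V) (u v : V) : ℕ :=
  Nat.card {T : Finset V // IsInducedP4 S T ∧ u ∈ T ∧ v ∈ T}

set_option linter.unusedSectionVars false

lemma p4_mk {V : Type*} [DecidableEq V] (S : SimpleGraph V) {a b c d : V}
    (hab : S.Adj a b) (hbc : S.Adj b c) (hcd : S.Adj c d)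
    (hac : ¬S.Adj a c) (had : ¬S.Adj a d) (hbd : ¬S.Adj b d) :
    IsInducedP4 S {a, b, c, d} := by
  have nab : a ≠ b := hab.ne
  have nbc : b ≠ c := hbc.ne
  have ncd : c ≠ d := hcd.ne
  have nac : a ≠ c := by rintro rfl; exact had hcd
  have nad : a ≠ d := by rintro rfl; exact hbd hab.symm
  have nbd : b ≠ d := by rintro rfl; exact had hab
  have hca : ¬S.Adj c a := fun h => hac h.symm
  have hda : ¬S.Adj d a := fun h => had h.symm
  have hdb : ¬S.Adj d b := fun h => hbd h.symm
  have hcard : ({a, b, c, d} : Finset V).card = 4 := by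
    rw [card_insert_of_notMem (by simp [nab, nac, nad]),
      card_insert_of_notMem (by simp [nbc, nbd]),
      card_insert_of_notMem (by simp [ncd]), card_singleton]
  refine ⟨hcard, ?_⟩
  have ha : a ∈ ({a,b,c,d} : Finset V) := by simp
  have hb : b ∈ ({a,b,c,d} : Finset V) := by simp
  have hc : c ∈ ({a,b,c,d} : Finset V) := by simp
  have hd' : d ∈ ({a,b,c,d} : Finset V) := by simp
  let g : Fin 4 → (({a,b,c,d} : Finset V) : Set V) := ![⟨a, ha⟩, ⟨b, hb⟩, ⟨c, hc⟩, ⟨d, hd'⟩]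
  let f : (({a,b,c,d} : Finset V) : Set V) → Fin 4 := fun z =>
    if z.1 = a then 0 else if z.1 = b then 1 else if z.1 = c then 2 else 3
  have hleft : Function.LeftInverse g f := by
    rintro ⟨z, hz⟩
    simp only [Finset.coe_insert, Finset.coe_singleton, Set.mem_insert_iff,
      Set.mem_singleton_iff] at hz
    rcases hz with rfl | rfl | rfl | rfl <;>
      simp [f, g, nab, nac, nad, nbc, nbd, ncd, nab.symm, nac.symm, nbc.symm,
        nad.symm, nbd.symm, ncd.symm]
  have hright : Function.RightInverse g f := by
    intro i
    fin_cases i <;>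
      simp [f, g, nab, nac, nad, nbc, nbd, ncd, nab.symm, nac.symm, nbc.symm,
        nad.symm, nbd.symm, ncd.symm]
  refine ⟨⟨⟨f, g, hleft, hright⟩, ?_⟩⟩
  rintro ⟨x, hx⟩ ⟨y, hy⟩
  simp only [Finset.coe_insert, Finset.coe_singleton, Set.mem_insert_iff,
    Set.mem_singleton_iff] at hx hy
  show (pathGraph 4).Adj _ _ ↔ S.Adj x y
  rcases hx with rfl | rfl | rfl | rfl <;> rcases hy with rfl | rfl | rfl | rfl <;>
    simp [f, pathGraph_adj, nab, nac, nad, nbc, nbd, ncd, nab.symm, nac.symm, nbc.symm,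
      nad.symm, nbd.symm, ncd.symm,
      hab, hbc, hcd, hac, had, hbd, hab.symm, hbc.symm, hcd.symm, hca, hda, hdb, S.irrefl] <;> decide


lemma p4_elim {V : Type*} [DecidableEq V] {S : SimpleGraph V} {T : Finset V}
    (hT : IsInducedP4 S T) :
    ∃ a b c d : V, T = {a, b, c, d} ∧ a ≠ b ∧ a ≠ c ∧ a ≠ d ∧ b ≠ c ∧ b ≠ d ∧ c ≠ d ∧
      S.Adj a b ∧ S.Adj b c ∧ S.Adj c d ∧ ¬S.Adj a c ∧ ¬S.Adj a d ∧ ¬S.Adj b d := by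
  obtain ⟨hcard, ⟨e⟩⟩ := hT
  set w : Fin 4 → V := fun i => (e.symm i).1 with hw
  have hinj : Function.Injective w := fun i j hij => by
    have := e.symm.injective (Subtype.ext hij); exact this
  have hmem : ∀ i, w i ∈ T := fun i => (e.symm i).2
  have key : ∀ i j : Fin 4, S.Adj (w i) (w j) ↔ (pathGraph 4).Adj i j := by
    intro i j
    exact (e.symm.map_adj_iff (v := i) (w := j))
  refine ⟨w 0, w 1, w 2, w 3, ?_, hinj.ne (by decide), hinj.ne (by decide),
    hinj.ne (by decide), hinj.ne (by decide), hinj.ne (by decide), hinj.ne (by decide),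
    (key 0 1).2 (by rw [pathGraph_adj]; decide), (key 1 2).2 (by rw [pathGraph_adj]; decide),
    (key 2 3).2 (by rw [pathGraph_adj]; decide),
    fun h => absurd ((key 0 2).1 h) (by rw [pathGraph_adj]; decide),
    fun h => absurd ((key 0 3).1 h) (by rw [pathGraph_adj]; decide),
    fun h => absurd ((key 1 3).1 h) (by rw [pathGraph_adj]; decide)⟩
  have hsub : ({w 0, w 1, w 2, w 3} : Finset V) ⊆ T := by
    intro z hz
    simp only [mem_insert, mem_singleton] at hz
    rcases hz with rfl | rfl | rfl | rfl <;> exact hmem _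
  have hc4 : ({w 0, w 1, w 2, w 3} : Finset V).card = 4 := by
    rw [card_insert_of_notMem (by simp [hinj.ne (show (0:Fin 4) ≠ 1 by decide),
        hinj.ne (show (0:Fin 4) ≠ 2 by decide), hinj.ne (show (0:Fin 4) ≠ 3 by decide)]),
      card_insert_of_notMem (by simp [hinj.ne (show (1:Fin 4) ≠ 2 by decide),
        hinj.ne (show (1:Fin 4) ≠ 3 by decide)]),
      card_insert_of_notMem (by simp [hinj.ne (show (2:Fin 4) ≠ 3 by decide)]),
      card_singleton]
  exact (eq_of_subset_of_card_le hsub (by rw [hcard, hc4])).symm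


section Family
variable {α : Type*} [DecidableEq α]

lemma eqsing {s : Finset α} {e : α} (h : s.card = 1) (he : e ∈ s) : s = {e} := by
  obtain ⟨x, hx⟩ := card_eq_one.1 h
  subst hx; simp_all

lemma triple_contra {I : Finset α} {A : α → Finset α} {d : ℕ}
    (hcard : ∀ t ∈ I, (A t).card = d)
    (hkey : ∀ t ∈ I, ∀ s ∈ I, t ≠ s → (A t \ A s).card = 1)
    {u v t s e a : α} (hu : u ∈ I) (hv : v ∈ I) (ht : t ∈ I) (hs : s ∈ I) (huv : u ≠ v)
    (heu : e ∈ A u) (hev : e ∈ A v) (het : e ∈ A t) (hes : e ∉ A s)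
    (hat : a ∈ A t) (hau : a ∉ A u) (hav : a ∉ A v) : False := by
  have sub : ∀ w ∈ I, e ∈ A w → A w ⊆ insert e (A s) := by
    intro w hw hew z hz
    have hws : w ≠ s := fun h => hes (h ▸ hew)
    by_cases hzs : z ∈ A s
    · exact mem_insert_of_mem hzs
    have h1 := hkey w hw s hs hws
    have hze : z ∈ A w \ A s := mem_sdiff.2 ⟨hz, hzs⟩
    have hee : e ∈ A w \ A s := mem_sdiff.2 ⟨hew, hes⟩
    have : z = e := by
      have := eqsing h1 hee
      rw [this, mem_singleton] at hze; exact hze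
    simp [this]
  have hsubU : insert a (A u ∪ A v) ⊆ insert e (A s) := by
    intro z hz
    rcases mem_insert.1 hz with rfl | hz
    · exact sub t ht het hat
    rcases mem_union.1 hz with h | h
    · exact sub u hu heu h
    · exact sub v hv hev h
  have hD : (A u ∪ A v).card = d + 1 := by
    rw [← card_sdiff_add_card, hkey u hu v hv huv, hcard v hv]; omega
  have hcL : (insert a (A u ∪ A v)).card = d + 2 := by
    rw [card_insert_of_notMem (by simp [hau, hav]), hD]
  have hcR : (insert e (A s)).card ≤ d + 1 := by
    calc (insert e (A s)).card ≤ (A s).card + 1 := card_insert_le _ _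
    _ = d + 1 := by rw [hcard s hs]
  have := card_le_card hsubU
  omega

lemma family_core {I K : Finset α} {A : α → Finset α} {d : ℕ}
    (hd2 : 2 ≤ d) (hI2 : 2 ≤ I.card)
    (hcard : ∀ t ∈ I, (A t).card = d)
    (hkey : ∀ t ∈ I, ∀ s ∈ I, t ≠ s → (A t \ A s).card = 1)
    (hcov : I.biUnion A = K)
    (hnu : ∀ k ∈ K, ∃ w ∈ I, k ∉ A w) :
    K.card = d + 1 ∧ I.card = K.card ∧ (∀ t ∈ I, ∃ x, K \ A t = {x}) ∧
      (∀ k ∈ K, ∃ t ∈ I, K \ A t = {k}) := by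
  obtain ⟨u, hu, v, hv, huv⟩ := one_lt_card.1 hI2
  have hsubK : ∀ t ∈ I, A t ⊆ K := fun t ht => hcov ▸ subset_biUnion_of_mem A ht
  have hD : (A u ∪ A v).card = d + 1 := by
    rw [← card_sdiff_add_card, hkey u hu v hv huv, hcard v hv]; omega
  have hall : ∀ t ∈ I, A t ⊆ A u ∪ A v := by
    intro t ht
    by_contra hcon
    rw [Finset.not_subset] at hcon
    obtain ⟨a, hat, haD⟩ := hcon
    have hau : a ∉ A u := fun h => haD (mem_union_left _ h)
    have hav : a ∉ A v := fun h => haD (mem_union_right _ h)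
    have htu : t ≠ u := fun h => hau (h ▸ hat)
    have htv : t ≠ v := fun h => hav (h ▸ hat)
    have h1 : A t \ A u = {a} := eqsing (hkey t ht u hu htu) (mem_sdiff.2 ⟨hat, hau⟩)
    have h2 : A t \ A v = {a} := eqsing (hkey t ht v hv htv) (mem_sdiff.2 ⟨hat, hav⟩)
    obtain ⟨e, het, hea⟩ := exists_mem_ne (by rw [hcard t ht]; omega) a
    have heu : e ∈ A u := by
      by_contra h
      exact hea (by have := mem_sdiff.2 ⟨het, h⟩; rw [h1, mem_singleton] at this; exact this)
    have hev : e ∈ A v := by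
      by_contra h
      exact hea (by have := mem_sdiff.2 ⟨het, h⟩; rw [h2, mem_singleton] at this; exact this)
    obtain ⟨s, hs, hes⟩ := hnu e (hsubK t ht het)
    exact triple_contra hcard hkey hu hv ht hs huv heu hev het hes hat hau hav
  have hKD : K = A u ∪ A v := by
    refine subset_antisymm ?_ (union_subset (hsubK u hu) (hsubK v hv))
    rw [← hcov]
    exact biUnion_subset.2 hall
  have hKcard : K.card = d + 1 := by rw [hKD, hD]
  have hmiss : ∀ t ∈ I, ∃ x, K \ A t = {x} := by
    intro t ht
    refine card_eq_one.1 ?_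
    rw [card_sdiff_of_subset (hsubK t ht), hKcard, hcard t ht]; omega
  have hmiss' : ∀ t, ∃ x, t ∈ I → K \ A t = {x} := by
    intro t
    by_cases ht : t ∈ I
    · obtain ⟨x, hx⟩ := hmiss t ht; exact ⟨x, fun _ => hx⟩
    · exact ⟨t, fun h => absurd h ht⟩
  choose f hf using hmiss'
  have hfK : ∀ t ∈ I, f t ∈ K \ A t := fun t ht => by rw [hf t ht]; exact mem_singleton_self _
  have hAeq : ∀ t ∈ I, A t = K \ {f t} := by
    intro t ht
    rw [← hf t ht, Finset.sdiff_sdiff_eq_self (hsubK t ht)]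
  have hinj : Set.InjOn f ↑I := by
    intro t ht t' ht' hff
    by_contra hne
    have heq : A t = A t' := by rw [hAeq t ht, hAeq t' ht', hff]
    have h1 := hkey t ht t' ht' hne
    rw [heq, sdiff_self] at h1
    simp at h1
  have hsurj : ∀ k ∈ K, ∃ t ∈ I, f t = k := by
    intro k hk
    obtain ⟨s, hs, hks⟩ := hnu k hk
    have : k ∈ K \ A s := mem_sdiff.2 ⟨hk, hks⟩
    rw [hf s hs, mem_singleton] at this
    exact ⟨s, hs, this.symm⟩
  have hIK : I.card = K.card := by
    refine le_antisymm (card_le_card_of_injOn f (fun t ht => (mem_sdiff.1 (hfK t ht)).1) hinj) ?_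
    refine card_le_card_of_surjOn f ?_
    intro k hk
    obtain ⟨t, ht, hft⟩ := hsurj k hk
    exact ⟨t, ht, hft⟩
  exact ⟨hKcard, hIK, hmiss, fun k hk => by
    obtain ⟨t, ht, hft⟩ := hsurj k hk
    exact ⟨t, ht, by rw [hf t ht, hft]⟩⟩

lemma family_univ {I K : Finset α} {A : α → Finset α} {d : ℕ}
    (hd2 : 2 ≤ d) (hI2 : 2 ≤ I.card)
    (hcard : ∀ t ∈ I, (A t).card = d)
    (hkey : ∀ t ∈ I, ∀ s ∈ I, t ≠ s → (A t \ A s).card = 1)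
    (hcov : I.biUnion A = K)
    {c : α} (hc : ∀ t ∈ I, c ∈ A t) : K.card ≠ I.card := by
  obtain ⟨u, hu, v, hv, huv⟩ := one_lt_card.1 hI2
  have hsubK : ∀ t ∈ I, A t ⊆ K := fun t ht => hcov ▸ subset_biUnion_of_mem A ht
  have hD : (A u ∪ A v).card = d + 1 := by
    rw [← card_sdiff_add_card, hkey u hu v hv huv, hcard v hv]; omega
  by_cases hall : ∀ t ∈ I, A t ⊆ A u ∪ A v
  · -- type B: K = A u ∪ A v, |K| = d+1, injection I → K \ {c}
    have hKD : K = A u ∪ A v := by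
      refine subset_antisymm ?_ (union_subset (hsubK u hu) (hsubK v hv))
      rw [← hcov]; exact biUnion_subset.2 hall
    have hKcard : K.card = d + 1 := by rw [hKD, hD]
    have hmiss : ∀ t ∈ I, ∃ x, K \ A t = {x} := by
      intro t ht
      refine card_eq_one.1 ?_
      rw [card_sdiff_of_subset (hsubK t ht), hKcard, hcard t ht]; omega
    have hmiss' : ∀ t, ∃ x, t ∈ I → K \ A t = {x} := by
      intro t
      by_cases ht : t ∈ I
      · obtain ⟨x, hx⟩ := hmiss t ht; exact ⟨x, fun _ => hx⟩
      · exact ⟨t, fun h => absurd h ht⟩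
    choose f hf using hmiss'
    have hfK : ∀ t ∈ I, f t ∈ K \ A t := fun t ht => by rw [hf t ht]; exact mem_singleton_self _
    have hAeq : ∀ t ∈ I, A t = K \ {f t} := by
      intro t ht
      rw [← hf t ht, Finset.sdiff_sdiff_eq_self (hsubK t ht)]
    have hinj : Set.InjOn f ↑I := by
      intro t ht t' ht' hff
      by_contra hne
      have : A t = A t' := by rw [hAeq t ht, hAeq t' ht', hff]
      have h1 := hkey t ht t' ht' hne
      rw [this, sdiff_self] at h1
      simp at h1
    have hmaps : ∀ t ∈ I, f t ∈ K.erase c := by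
      intro t ht
      obtain ⟨h1, h2⟩ := mem_sdiff.1 (hfK t ht)
      exact mem_erase.2 ⟨fun h => h2 (h ▸ hc t ht), h1⟩
    have : I.card ≤ (K.erase c).card := card_le_card_of_injOn f hmaps hinj
    have hcK : c ∈ K := hsubK u hu (hc u hu)
    rw [card_erase_of_mem hcK] at this
    omega
  · -- type A: common core
    push_neg at hall
    obtain ⟨t, ht, hcon⟩ := hall
    rw [Finset.not_subset] at hcon
    obtain ⟨a, hat, haD⟩ := hcon
    have hau : a ∉ A u := fun h => haD (mem_union_left _ h)
    have hav : a ∉ A v := fun h => haD (mem_union_right _ h)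
    have htu : t ≠ u := fun h => hau (h ▸ hat)
    have htv : t ≠ v := fun h => hav (h ▸ hat)
    have h1 : A t \ A u = {a} := eqsing (hkey t ht u hu htu) (mem_sdiff.2 ⟨hat, hau⟩)
    have h2 : A t \ A v = {a} := eqsing (hkey t ht v hv htv) (mem_sdiff.2 ⟨hat, hav⟩)
    set C : Finset α := (A t).erase a with hC
    have hCu : C ⊆ A u := by
      intro z hz
      obtain ⟨hza, hzt⟩ := mem_erase.1 hz
      by_contra h
      exact hza (by have := mem_sdiff.2 ⟨hzt, h⟩; rw [h1, mem_singleton] at this; exact this)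
    have hCv : C ⊆ A v := by
      intro z hz
      obtain ⟨hza, hzt⟩ := mem_erase.1 hz
      by_contra h
      exact hza (by have := mem_sdiff.2 ⟨hzt, h⟩; rw [h2, mem_singleton] at this; exact this)
    have hCall : ∀ s ∈ I, C ⊆ A s := by
      intro s hs z hz
      by_contra hzs
      obtain ⟨hza, hzt⟩ := mem_erase.1 hz
      exact triple_contra hcard hkey hu hv ht hs huv (hCu hz) (hCv hz) hzt hzs hat hau hav
    have hCcard : C.card = d - 1 := by
      rw [hC, card_erase_of_mem hat, hcard t ht]
    -- each A s = C ∪ {y s}, y injective, y s ∉ C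
    have hex : ∀ s, ∃ y, s ∈ I → A s \ C = {y} := by
      intro s
      by_cases hs : s ∈ I
      · refine (card_eq_one.1 ?_).imp fun y hy _ => hy
        rw [card_sdiff_of_subset (hCall s hs), hCcard, hcard s hs]; omega
      · exact ⟨s, fun h => absurd h hs⟩
    choose y hy using hex
    have hyA : ∀ s ∈ I, y s ∈ A s \ C := fun s hs => by
      rw [hy s hs]; exact mem_singleton_self _
    have hAeq : ∀ s ∈ I, A s = C ∪ {y s} := by
      intro s hs
      rw [← hy s hs, union_sdiff_of_subset (hCall s hs)]
    have hyinj : Set.InjOn y ↑I := by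
      intro s hs s' hs' hyy
      by_contra hne
      have : A s = A s' := by rw [hAeq s hs, hAeq s' hs', hyy]
      have hk1 := hkey s hs s' hs' hne
      rw [this, sdiff_self] at hk1
      simp at hk1
    have hsub2 : C ∪ I.image y ⊆ K := by
      refine union_subset (subset_trans ?_ (hsubK t ht)) ?_
      · exact erase_subset _ _
      · intro z hz
        obtain ⟨s, hs, rfl⟩ := mem_image.1 hz
        exact hsubK s hs (mem_sdiff.1 (hyA s hs)).1
    have hdisj : Disjoint C (I.image y) := by
      rw [disjoint_right]
      intro z hz hzC
      obtain ⟨s, hs, rfl⟩ := mem_image.1 hz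
      exact (mem_sdiff.1 (hyA s hs)).2 hzC
    have himg : (I.image y).card = I.card := card_image_of_injOn hyinj
    have : C.card + I.card ≤ K.card := by
      rw [← himg, ← card_union_of_disjoint hdisj]
      exact card_le_card hsub2
    omega
end Family


section Main
variable {V : Type*} [Fintype V] [DecidableEq V]
  {S : SimpleGraph V} [DecidableRel S.Adj] {K I : Finset V}

lemma memK (hpart : K ∪ I = Finset.univ) (hI : Sᶜ.IsClique (I : Set V))
    {t z : V} (ht : t ∈ I) (h : S.Adj t z) : z ∈ K := by
  have hz : z ∉ I := by
    intro hzI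
    exact ((S.compl_adj t z).1 (hI (by exact_mod_cast ht) (by exact_mod_cast hzI) h.ne)).2 h
  have : z ∈ K ∪ I := hpart ▸ mem_univ z
  simpa [hz] using mem_union.1 this

lemma nadjI (hI : Sᶜ.IsClique (I : Set V)) {u v : V} (hu : u ∈ I) (hv : v ∈ I) :
    ¬S.Adj u v := by
  intro h
  exact ((S.compl_adj u v).1 (hI (by exact_mod_cast hu) (by exact_mod_cast hv) h.ne)).2 h

lemma p4_cross (hpart : K ∪ I = Finset.univ) (hK : S.IsClique (K : Set V))
    (hI : Sᶜ.IsClique (I : Set V)) {u v x y : V} (hu : u ∈ I) (hv : v ∈ I)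
    (hux : S.Adj u x) (hvx : ¬S.Adj v x) (hvy : S.Adj v y) (huy : ¬S.Adj u y) :
    IsInducedP4 S {u, x, y, v} := by
  have hxK : x ∈ K := memK hpart hI hu hux
  have hyK : y ∈ K := memK hpart hI hv hvy
  have hxy : x ≠ y := by rintro rfl; exact huy hux
  have haxy : S.Adj x y := hK (by exact_mod_cast hxK) (by exact_mod_cast hyK) hxy
  exact p4_mk S hux haxy hvy.symm huy (nadjI hI hu hv) (fun h => hvx h.symm)

lemma p4_classify (hpart : K ∪ I = Finset.univ) (hK : S.IsClique (K : Set V))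
    (hI : Sᶜ.IsClique (I : Set V)) {u v : V} (hu : u ∈ I) (hv : v ∈ I) (huv : u ≠ v)
    {T : Finset V} (hT : IsInducedP4 S T) (huT : u ∈ T) (hvT : v ∈ T) :
    ∃ x y, S.Adj u x ∧ ¬S.Adj v x ∧ S.Adj v y ∧ ¬S.Adj u y ∧ T = {u, x, y, v} := by
  obtain ⟨a, b, c, d, rfl, nab, nac, nad, nbc, nbd, ncd,
    hab, hbc, hcd, hac, had, hbd⟩ := p4_elim hT
  have hIK : ∀ {t z : V}, t ∈ I → S.Adj t z → z ∈ K := fun ht h => memK hpart hI ht h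
  have hKadj : ∀ {x y : V}, x ∈ K → y ∈ K → x ≠ y → S.Adj x y := fun hx hy hxy =>
    hK (by exact_mod_cast hx) (by exact_mod_cast hy) hxy
  simp only [mem_insert, mem_singleton] at huT hvT
  rcases huT with rfl | rfl | rfl | rfl <;> rcases hvT with rfl | rfl | rfl | rfl
  · exact absurd rfl huv
  · exact absurd hab (nadjI hI hu hv)
  · exact absurd (hKadj (hIK hu hab) (hIK hv hcd) nbd) hbd
  · exact ⟨b, c, hab, fun h => hbd h.symm, hcd.symm, hac, rfl⟩
  · exact absurd hab.symm (nadjI hI hu hv)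
  · exact absurd rfl huv
  · exact absurd hbc (nadjI hI hu hv)
  · exact absurd (hKadj (hIK hu hab.symm) (hIK hv hcd.symm) nac) hac
  · exact absurd (hKadj (hIK hv hab) (hIK hu hcd) nbd) hbd
  · exact absurd hbc.symm (nadjI hI hu hv)
  · exact absurd rfl huv
  · exact absurd hcd (nadjI hI hu hv)
  · refine ⟨c, b, hcd.symm, hac, hab, fun h => hbd h.symm, ?_⟩
    ext z; simp only [mem_insert, mem_singleton]; tauto
  · exact absurd (hKadj (hIK hv hab.symm) (hIK hu hcd.symm) nac) hac
  · exact absurd hcd.symm (nadjI hI hu hv)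
  · exact absurd rfl huv

lemma key_card (hpart : K ∪ I = Finset.univ) (hK : S.IsClique (K : Set V))
    (hI : Sᶜ.IsClique (I : Set V)) {u v : V} (hu : u ∈ I) (hv : v ∈ I) (huv : u ≠ v)
    (hs : sigmaP4 S u v = 1) :
    (S.neighborFinset u \ S.neighborFinset v).card = 1 ∧
    (S.neighborFinset v \ S.neighborFinset u).card = 1 := by
  obtain ⟨hsub, hne⟩ := Nat.card_eq_one_iff_unique.1 hs
  obtain ⟨T, hT, huT, hvT⟩ := hne
  obtain ⟨x, y, h1, h2, h3, h4, rfl⟩ := p4_classify hpart hK hI hu hv huv hT huT hvT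
  have hvu : ¬S.Adj u v := nadjI hI hu hv
  constructor
  · rw [show S.neighborFinset u \ S.neighborFinset v = {x} from ?_, card_singleton]
    rw [eq_singleton_iff_unique_mem]
    refine ⟨by simp [mem_sdiff, mem_neighborFinset, h1, h2], ?_⟩
    intro x' hx'
    rw [mem_sdiff, mem_neighborFinset, mem_neighborFinset] at hx'
    obtain ⟨h1', h2'⟩ := hx'
    have hT' : IsInducedP4 S {u, x', y, v} := p4_cross hpart hK hI hu hv h1' h2' h3 h4
    have : ({u, x', y, v} : Finset V) = {u, x, y, v} := by
      have := hsub.elim (⟨{u, x', y, v}, hT', by simp, by simp⟩ :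
        {T : Finset V // IsInducedP4 S T ∧ u ∈ T ∧ v ∈ T})
        ⟨{u, x, y, v}, hT, huT, hvT⟩
      exact congrArg Subtype.val this
    have hx'mem : x' ∈ ({u, x, y, v} : Finset V) := this ▸ (by simp)
    simp only [mem_insert, mem_singleton] at hx'mem
    rcases hx'mem with rfl | rfl | rfl | rfl
    · exact absurd h1' (S.irrefl)
    · rfl
    · exact absurd h1' h4
    · exact absurd h1' hvu
  · rw [show S.neighborFinset v \ S.neighborFinset u = {y} from ?_, card_singleton]
    rw [eq_singleton_iff_unique_mem]
    refine ⟨by simp [mem_sdiff, mem_neighborFinset, h3, h4], ?_⟩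
    intro y' hy'
    rw [mem_sdiff, mem_neighborFinset, mem_neighborFinset] at hy'
    obtain ⟨h1', h2'⟩ := hy'
    have hT' : IsInducedP4 S {u, x, y', v} := p4_cross hpart hK hI hu hv h1 h2 h1' h2'
    have : ({u, x, y', v} : Finset V) = {u, x, y, v} := by
      have := hsub.elim (⟨{u, x, y', v}, hT', by simp, by simp⟩ :
        {T : Finset V // IsInducedP4 S T ∧ u ∈ T ∧ v ∈ T})
        ⟨{u, x, y, v}, hT, huT, hvT⟩
      exact congrArg Subtype.val this
    have hy'mem : y' ∈ ({u, x, y, v} : Finset V) := this ▸ (by simp)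
    simp only [mem_insert, mem_singleton] at hy'mem
    rcases hy'mem with rfl | rfl | rfl | rfl
    · exact absurd h1' (fun h => hvu h.symm)
    · exact absurd h1' h2
    · rfl
    · exact absurd h1' (S.irrefl)

end Main


theorem stmt17 {V : Type*} [Fintype V] [DecidableEq V] [Nonempty V]
    (S : SimpleGraph V) [DecidableRel S.Adj] (K I : Finset V)
    (hpart : K ∪ I = Finset.univ) (hdisj : Disjoint K I)
    (hK : S.IsClique (K : Set V)) (hI : Sᶜ.IsClique (I : Set V))
    (hcov : I.biUnion (fun v => S.neighborFinset v) = K)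
    (hbK : K.card = S.cliqueNum) (hbI : I.card = Sᶜ.cliqueNum)
    (hI2 : 2 ≤ I.card)
    (hsig : ∀ u ∈ I, ∀ v ∈ I, u ≠ v → sigmaP4 S u v = 1)
    (U : Set V) (hU : U = {x : V | ∀ w : V, w ≠ x → S.Adj x w})
    (d : ℕ) (hd : ∀ v ∈ I, S.degree v = d) :
    ((∀ x : V, ∃ T : Finset V, IsInducedP4 S T ∧ x ∈ T) ↔ U = ∅) ∧
    ((∀ x : V, ∃ T : Finset V, IsInducedP4 S T ∧ x ∈ T) →
      K.card = I.card ∧ (d = 1 ∨ d = K.card - 1)) ∧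
    ((K.card = I.card ∨ d = 1) →
      ∀ x : V, ∃ T : Finset V, IsInducedP4 S T ∧ x ∈ T) := by
  classical
  set A : V → Finset V := fun v => S.neighborFinset v with hA
  have hcard : ∀ t ∈ I, (A t).card = d := fun t ht => hd t ht
  have hkey : ∀ t ∈ I, ∀ s ∈ I, t ≠ s → (A t \ A s).card = 1 := fun t ht s hs hts =>
    (key_card hpart hK hI ht hs hts (hsig t ht s hs hts)).1
  have hd1 : 1 ≤ d := by
    obtain ⟨u, hu, v, hv, huv⟩ := Finset.one_lt_card.1 hI2
    have h1 := hkey u hu v hv huv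
    have h2 := Finset.card_le_card (Finset.sdiff_subset : A u \ A v ⊆ A u)
    have h3 := hcard u hu
    omega
  have hmemA : ∀ t z : V, z ∈ A t ↔ S.Adj t z := fun t z => S.mem_neighborFinset t z
  have hsubK : ∀ t ∈ I, A t ⊆ K := by
    intro t ht z hz
    exact memK hpart hI ht ((hmemA t z).1 hz)
  -- universal vertices lie in no induced P4
  have h_univ_noP4 : ∀ c ∈ U, ∀ T : Finset V, IsInducedP4 S T → c ∉ T := by
    intro c hc T hT hcT
    rw [hU] at hc
    obtain ⟨a, b, c', d', rfl, nab, nac, nad, nbc, nbd, ncd,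
      hab, hbc, hcd, hac, had, hbd⟩ := p4_elim hT
    simp only [Finset.mem_insert, Finset.mem_singleton] at hcT
    rcases hcT with rfl | rfl | rfl | rfl
    · exact had (hc d' (Ne.symm nad))
    · exact hbd (hc d' (Ne.symm nbd))
    · exact hac (hc a nac).symm
    · exact hbd (hc b nbd).symm
  have active_to_U : (∀ x : V, ∃ T : Finset V, IsInducedP4 S T ∧ x ∈ T) → U = ∅ := by
    intro hactive
    rw [Set.eq_empty_iff_forall_notMem]
    intro c hc
    obtain ⟨T, hT, hcT⟩ := hactive c
    exact h_univ_noP4 c hc T hT hcT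
  -- the thin spider case
  have thin_f : d = 1 → ∃ f : V → V, ∀ t ∈ I, A t = {f t} := by
    intro hd1'
    have hsing : ∀ t, ∃ x, t ∈ I → A t = {x} := by
      intro t
      by_cases ht : t ∈ I
      · obtain ⟨x, hx⟩ := Finset.card_eq_one.1 (by rw [hcard t ht, hd1'])
        exact ⟨x, fun _ => hx⟩
      · exact ⟨t, fun h => absurd h ht⟩
    obtain ⟨f, hf⟩ := Classical.axiomOfChoice hsing
    exact ⟨f, fun t ht => hf t ht⟩
  have thin_main : ∀ f : V → V, (∀ t ∈ I, A t = {f t}) →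
      ∀ t ∈ I, ∃ T : Finset V, IsInducedP4 S T ∧ t ∈ T ∧ f t ∈ T := by
    intro f hf t ht
    obtain ⟨s, hs, hst⟩ := Finset.exists_mem_ne hI2 t
    have hts : t ≠ s := Ne.symm hst
    have hft : f t ∈ A t := by rw [hf t ht]; exact Finset.mem_singleton_self _
    have hfs : f s ∈ A s := by rw [hf s hs]; exact Finset.mem_singleton_self _
    have hftns : f t ∉ A s := by
      intro h
      have h1 := hkey t ht s hs hts
      have : A t \ A s = ∅ := by
        rw [hf t ht]
        exact Finset.sdiff_eq_empty_iff_subset.2 (Finset.singleton_subset_iff.2 h)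
      rw [this] at h1
      simp at h1
    have hfsnt : f s ∉ A t := by
      intro h
      rw [hf t ht, Finset.mem_singleton] at h
      exact hftns (h ▸ hfs)
    refine ⟨{t, f t, f s, s}, p4_cross hpart hK hI ht hs ((hmemA t _).1 hft)
      (fun h => hftns ((hmemA s _).2 h)) ((hmemA s _).1 hfs)
      (fun h => hfsnt ((hmemA t _).2 h)), by simp, by simp⟩
  have thin_active : d = 1 → ∀ x : V, ∃ T : Finset V, IsInducedP4 S T ∧ x ∈ T := by
    intro hd1'
    obtain ⟨f, hf⟩ := thin_f hd1'
    intro x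
    have hx : x ∈ K ∪ I := hpart ▸ Finset.mem_univ x
    rcases Finset.mem_union.1 hx with hxK | hxI
    · rw [← hcov] at hxK
      obtain ⟨w, hw, hxw⟩ := Finset.mem_biUnion.1 hxK
      have : x = f w := by rw [hf w hw, Finset.mem_singleton] at hxw; exact hxw
      obtain ⟨T, hT, _, hfT⟩ := thin_main f hf w hw
      exact ⟨T, hT, this ▸ hfT⟩
    · obtain ⟨T, hT, htT, _⟩ := thin_main f hf x hxI
      exact ⟨T, hT, htT⟩
  have thin_cards : d = 1 → K.card = I.card := by
    intro hd1'
    obtain ⟨f, hf⟩ := thin_f hd1'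
    have hfK : ∀ t ∈ I, f t ∈ K := by
      intro t ht
      exact hsubK t ht (by rw [hf t ht]; exact Finset.mem_singleton_self _)
    have hinj : Set.InjOn f ↑I := by
      intro t ht t' ht' hff
      by_contra hne
      have heq : A t = A t' := by rw [hf t ht, hf t' ht', hff]
      have h1 := hkey t ht t' ht' hne
      rw [heq, sdiff_self] at h1
      simp at h1
    have hsurj : Set.SurjOn f ↑I ↑K := by
      intro k hk
      rw [← hcov] at hk
      obtain ⟨w, hw, hkw⟩ := Finset.mem_biUnion.1 (by exact_mod_cast hk)
      rw [hf w hw, Finset.mem_singleton] at hkw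
      exact ⟨w, hw, hkw.symm⟩
    exact le_antisymm (Finset.card_le_card_of_surjOn f hsurj)
      (Finset.card_le_card_of_injOn f hfK hinj)
  -- the thick spider case
  have core_active : (∀ k ∈ K, ∃ w ∈ I, k ∉ A w) → 2 ≤ d →
      ∀ x : V, ∃ T : Finset V, IsInducedP4 S T ∧ x ∈ T := by
    intro hnu hd2
    obtain ⟨hKc, hIc, hmiss, hsurj⟩ := family_core hd2 hI2 hcard hkey hcov hnu
    have hAeq : ∀ t ∈ I, ∀ x, K \ A t = {x} → A t = K \ {x} := by
      intro t ht x hx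
      rw [← hx, Finset.sdiff_sdiff_eq_self (hsubK t ht)]
    have main : ∀ t ∈ I, ∀ xt, K \ A t = {xt} →
        ∃ T : Finset V, IsInducedP4 S T ∧ t ∈ T ∧ xt ∈ T := by
      intro t ht xt hxt
      obtain ⟨s, hs, hst⟩ := Finset.exists_mem_ne hI2 t
      have hts : t ≠ s := Ne.symm hst
      obtain ⟨xs, hxs⟩ := hmiss s hs
      have hxtK : xt ∈ K := by
        have : xt ∈ K \ A t := hxt ▸ Finset.mem_singleton_self _
        exact (Finset.mem_sdiff.1 this).1
      have hxsK : xs ∈ K := by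
        have : xs ∈ K \ A s := hxs ▸ Finset.mem_singleton_self _
        exact (Finset.mem_sdiff.1 this).1
      have hxtnA : xt ∉ A t := by
        have : xt ∈ K \ A t := hxt ▸ Finset.mem_singleton_self _
        exact (Finset.mem_sdiff.1 this).2
      have hxsnA : xs ∉ A s := by
        have : xs ∈ K \ A s := hxs ▸ Finset.mem_singleton_self _
        exact (Finset.mem_sdiff.1 this).2
      have hne : xs ≠ xt := by
        intro h
        have heq : A t = A s := by rw [hAeq t ht xt hxt, hAeq s hs xs hxs, h]
        have h1 := hkey t ht s hs hts
        rw [heq, sdiff_self] at h1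
        simp at h1
      have hxsA : xs ∈ A t := by
        rw [hAeq t ht xt hxt]
        exact Finset.mem_sdiff.2 ⟨hxsK, by simpa using hne⟩
      have hxtA : xt ∈ A s := by
        rw [hAeq s hs xs hxs]
        exact Finset.mem_sdiff.2 ⟨hxtK, by simpa using Ne.symm hne⟩
      refine ⟨{t, xs, xt, s}, p4_cross hpart hK hI ht hs ((hmemA t _).1 hxsA)
        (fun h => hxsnA ((hmemA s _).2 h)) ((hmemA s _).1 hxtA)
        (fun h => hxtnA ((hmemA t _).2 h)), by simp, by simp⟩
    intro x
    have hx : x ∈ K ∪ I := hpart ▸ Finset.mem_univ x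
    rcases Finset.mem_union.1 hx with hxK | hxI
    · obtain ⟨t, ht, hxt⟩ := hsurj x hxK
      obtain ⟨T, hT, _, hxT⟩ := main t ht x hxt
      exact ⟨T, hT, hxT⟩
    · obtain ⟨xt, hxt⟩ := hmiss x hxI
      obtain ⟨T, hT, hxT, _⟩ := main x hxI xt hxt
      exact ⟨T, hT, hxT⟩
  have U_to_hnu : U = ∅ → ∀ k ∈ K, ∃ w ∈ I, k ∉ A w := by
    intro hUe k hk
    have hknU : k ∉ U := by rw [hUe]; exact Set.notMem_empty k
    rw [hU] at hknU
    simp only [Set.mem_setOf_eq, not_forall] at hknU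
    obtain ⟨w, hwk, hnadj⟩ := hknU
    have hwI : w ∈ I := by
      have hw : w ∈ K ∪ I := hpart ▸ Finset.mem_univ w
      rcases Finset.mem_union.1 hw with hwK | hwI
      · exact absurd (hK (by exact_mod_cast hk) (by exact_mod_cast hwK) (Ne.symm hwk)) hnadj
      · exact hwI
    exact ⟨w, hwI, fun h => hnadj ((hmemA w k).1 h).symm⟩
  have U_to_active : U = ∅ → ∀ x : V, ∃ T : Finset V, IsInducedP4 S T ∧ x ∈ T := by
    intro hUe
    rcases eq_or_lt_of_le hd1 with h1 | h2
    · exact thin_active h1.symm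
    · exact core_active (U_to_hnu hUe) h2
  refine ⟨⟨active_to_U, U_to_active⟩, ?_, ?_⟩
  · intro hactive
    have hnu := U_to_hnu (active_to_U hactive)
    rcases eq_or_lt_of_le hd1 with h1 | h2
    · exact ⟨thin_cards h1.symm, Or.inl h1.symm⟩
    · obtain ⟨hKc, hIc, _, _⟩ := family_core h2 hI2 hcard hkey hcov hnu
      exact ⟨hIc.symm, Or.inr (by omega)⟩
  · intro hc
    rcases eq_or_lt_of_le hd1 with h1 | h2
    · exact thin_active h1.symm
    rcases hc with hKI | hd1'
    · have hnu : ∀ k ∈ K, ∃ w ∈ I, k ∉ A w := by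
        by_contra hcon
        push_neg at hcon
        obtain ⟨k, hk, hks⟩ := hcon
        exact family_univ h2 hI2 hcard hkey hcov (fun t ht => hks t ht) hKI
      exact core_active hnu h2
    · omega
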